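/- Let R be a ring and n a natural number. If R is a quasi-Baer ring, then A_n is a quasi-Baer ring. -/

import Mathlib

/-- A ring `T` is quasi-Baer if the right annihilator of every two-sided ideal of `T`
equals `eT` for some idempotent `e ∈ T`. -/
def IsQuasiBaer (T : Type*) [Ring T] : Prop :=
  ∀ I : TwoSidedIdeal T, ∃ e : T, e * e = e ∧
    {x : T | ∀ a ∈ I, a * x = 0} = {x : T | e * x = x}

section Aux

variable {R : Type*} [Ring R] {n : ℕ}

/-- Pure ring computation used at the end of the key induction. -/
private lemma quasiBaer_ring_calc (u v e r : R)
    (h1 : ∀ s : R, u * e * s * v = 0)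
    (h2 : ∀ s : R, u * s * ((1 - e) * v) = 0)
    (hsc : ∀ s : R, e * (s * e) = s * e) : u * r * v = 0 := by
  have k3 : (1 - e) * (r * e) = 0 := by
    rw [sub_mul, one_mul, hsc r, sub_self]
  have expand : u * r * v =
      u * e * r * v + u * ((1 - e) * (r * e)) * v + u * ((1 - e) * r) * ((1 - e) * v) := by
    noncomm_ring
  rw [expand, k3, h1 r, h2 ((1 - e) * r), mul_zero, zero_mul, add_zero, add_zero]

private lemma right_ann_twoSidedIdeal_aux (v : R) :
    ∃ K : TwoSidedIdeal R, ∀ a : R, a ∈ K ↔ ∀ s : R, a * s * v = 0 := by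
  refine ⟨TwoSidedIdeal.mk' {a : R | ∀ s : R, a * s * v = 0}
    (fun s => by rw [zero_mul, zero_mul])
    (fun {x y} hx hy s => by rw [add_mul, add_mul, hx s, hy s, add_zero])
    (fun {x} hx s => by rw [neg_mul, neg_mul, hx s, neg_zero])
    (fun {x y} hy s => by rw [mul_assoc, mul_assoc, ← mul_assoc y, hy s, mul_zero])
    (fun {x y} hx s => by rw [mul_assoc x y s, hx (y * s)]), fun a => ?_⟩
  rw [TwoSidedIdeal.mem_mk']
  rfl

private lemma key_lemma (hR : IsQuasiBaer R) (N : ℕ) :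
    ∀ f g : AddMonoidAlgebra R (Fin n →₀ ℕ),
      f.coeff.support.card + g.coeff.support.card ≤ N →
      (∀ p : AddMonoidAlgebra R (Fin n →₀ ℕ), f * p * g = 0) →
      ∀ μ (r : R) m, f.coeff μ * r * g.coeff m = 0 := by
  classical
  induction N with
  | zero =>
    intro f g hcard _ μ r m
    have hf : f = 0 := by
      have : f.coeff.support.card = 0 := by omega
      simpa [Finset.card_eq_zero, Finsupp.support_eq_empty] using this
    rw [hf]
    show (0 : R) * r * g.coeff m = 0
    rw [zero_mul, zero_mul]
  | succ N ih =>
    intro f g hcard H μ r m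
    by_cases hf : f = 0
    · rw [hf]; show (0 : R) * r * g.coeff m = 0; rw [zero_mul, zero_mul]
    by_cases hg : g = 0
    · rw [hg]; show f.coeff μ * r * (0 : R) = 0; rw [mul_zero]
    -- leading monomials w.r.t. the lexicographic order
    obtain ⟨τ, hτs, hτ⟩ := Finset.exists_mem_eq_sup f.coeff.support
      (Finsupp.support_nonempty_iff.2 (by simpa using hf)) (toLex : (Fin n →₀ ℕ) → Lex (Fin n →₀ ℕ))
    obtain ⟨ν, hνs, hν⟩ := Finset.exists_mem_eq_sup g.coeff.support
      (Finsupp.support_nonempty_iff.2 (by simpa using hg)) (toLex : (Fin n →₀ ℕ) → Lex (Fin n →₀ ℕ))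
    have hadd : ∀ a b : Fin n →₀ ℕ,
        (toLex : (Fin n →₀ ℕ) → Lex (Fin n →₀ ℕ)) (a + b) = toLex a + toLex b :=
      fun _ _ => rfl
    have hDinj : Function.Injective (toLex : (Fin n →₀ ℕ) → Lex (Fin n →₀ ℕ)) :=
      toLex.injective
    -- the top coefficients annihilate with any ring element in between
    have htop : ∀ s : R, f.coeff τ * s * g.coeff ν = 0 := by
      intro s
      have hsupp : (f * AddMonoidAlgebra.single 0 s).coeff.support ⊆ f.coeff.support := by
        intro x hx
        rw [Finsupp.mem_support_iff] at hx ⊢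
        rw [AddMonoidAlgebra.coeff_mul_single_zero] at hx
        exact fun h => hx (by rw [h, zero_mul])
      have hp : (f * AddMonoidAlgebra.single 0 s).supDegree
          (toLex : (Fin n →₀ ℕ) → Lex (Fin n →₀ ℕ)) ≤ toLex τ :=
        hτ ▸ Finset.sup_mono hsupp
      have hq : g.supDegree (toLex : (Fin n →₀ ℕ) → Lex (Fin n →₀ ℕ)) ≤ toLex ν :=
        hν.le
      have hco := AddMonoidAlgebra.coeff_add_of_supDegree_le hadd hDinj hp hq
      rw [H (AddMonoidAlgebra.single 0 s), AddMonoidAlgebra.coeff_mul_single_zero] at hco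
      have : (0 : AddMonoidAlgebra R (Fin n →₀ ℕ)).coeff (τ + ν) = 0 := rfl
      rw [this] at hco
      exact hco.symm
    -- the idempotent attached to the two-sided ideal generated by the top coefficient of f
    obtain ⟨e, he, hset⟩ := hR (TwoSidedIdeal.span {f.coeff τ})
    have h_kill_e : ∀ c ∈ TwoSidedIdeal.span {f.coeff τ}, c * e = 0 := by
      have : e ∈ {x : R | e * x = x} := he
      rw [← hset] at this
      exact this
    have hae : f.coeff τ * e = 0 :=
      h_kill_e _ (TwoSidedIdeal.subset_span (Set.mem_singleton _))
    -- the top coefficient of g lies in eR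
    have hb : e * g.coeff ν = g.coeff ν := by
      have hmem : g.coeff ν ∈ {x : R | ∀ c ∈ TwoSidedIdeal.span {f.coeff τ}, c * x = 0} := by
        intro c hc
        obtain ⟨K, hK⟩ := right_ann_twoSidedIdeal_aux (R := R) (g.coeff ν)
        have hSK : ({f.coeff τ} : Set R) ⊆ K := by
          intro y hy
          rw [Set.mem_singleton_iff] at hy
          subst hy
          exact SetLike.mem_coe.mpr ((hK (f.coeff τ)).mpr htop)
        have hcK : c ∈ K := TwoSidedIdeal.mem_span_iff.mp hc K hSK
        have := (hK c).mp hcK 1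
        rwa [mul_one] at this
      rw [hset] at hmem
      exact hmem
    -- e is left semicentral
    have hsc : ∀ s : R, e * (s * e) = s * e := by
      intro s
      have hmem : s * e ∈ {x : R | ∀ c ∈ TwoSidedIdeal.span {f.coeff τ}, c * x = 0} := by
        intro c hc
        rw [← mul_assoc]
        exact h_kill_e _ (TwoSidedIdeal.mul_mem_right _ _ _ hc)
      rw [hset] at hmem
      exact hmem
    -- strip the top of f : f * single 0 e has strictly smaller support
    have hf'supp : (f * AddMonoidAlgebra.single 0 e).coeff.support ⊂ f.coeff.support := by
      rw [Finset.ssubset_iff_of_subset]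
      · exact ⟨τ, hτs, by
          rw [Finsupp.mem_support_iff, not_not, AddMonoidAlgebra.coeff_mul_single_zero, hae]⟩
      · intro x hx
        rw [Finsupp.mem_support_iff] at hx ⊢
        rw [AddMonoidAlgebra.coeff_mul_single_zero] at hx
        exact fun h => hx (by rw [h, zero_mul])
    have h1 : ∀ s : R, f.coeff μ * e * s * g.coeff m = 0 := by
      intro s
      have hH : ∀ p : AddMonoidAlgebra R (Fin n →₀ ℕ),
          (f * AddMonoidAlgebra.single 0 e) * p * g = 0 := by
        intro p
        have := H (AddMonoidAlgebra.single 0 e * p)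
        rwa [← mul_assoc] at this
      have hcard' : (f * AddMonoidAlgebra.single 0 e).coeff.support.card + g.coeff.support.card ≤ N := by
        have := Finset.card_lt_card hf'supp
        omega
      have := ih (f * AddMonoidAlgebra.single 0 e) g hcard' hH μ s m
      rwa [AddMonoidAlgebra.coeff_mul_single_zero] at this
    -- strip the top of g : single 0 (1-e) * g has strictly smaller support
    have hg'supp : (AddMonoidAlgebra.single 0 (1 - e) * g).coeff.support ⊂ g.coeff.support := by
      rw [Finset.ssubset_iff_of_subset]
      · exact ⟨ν, hνs, by
          rw [Finsupp.mem_support_iff, not_not, AddMonoidAlgebra.coeff_single_zero_mul,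
            sub_mul, one_mul, hb, sub_self]⟩
      · intro x hx
        rw [Finsupp.mem_support_iff] at hx ⊢
        rw [AddMonoidAlgebra.coeff_single_zero_mul] at hx
        exact fun h => hx (by rw [h, mul_zero])
    have h2 : ∀ s : R, f.coeff μ * s * ((1 - e) * g.coeff m) = 0 := by
      intro s
      have hH : ∀ p : AddMonoidAlgebra R (Fin n →₀ ℕ),
          f * p * (AddMonoidAlgebra.single 0 (1 - e) * g) = 0 := by
        intro p
        have := H (p * AddMonoidAlgebra.single 0 (1 - e))
        rw [← mul_assoc] at this ⊢
        exact this
      have hcard' : f.coeff.support.card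
          + (AddMonoidAlgebra.single 0 (1 - e) * g).coeff.support.card ≤ N := by
        have := Finset.card_lt_card hg'supp
        omega
      have := ih f (AddMonoidAlgebra.single 0 (1 - e) * g) hcard' hH μ s m
      rwa [AddMonoidAlgebra.coeff_single_zero_mul] at this
    exact quasiBaer_ring_calc (f.coeff μ) (g.coeff m) e r h1 h2 hsc

end Aux

/-- If `R` is quasi-Baer, then `A_n = AddMonoidAlgebra R (Fin n →₀ ℕ)`
is quasi-Baer. -/
theorem addMonoidAlgebra_isQuasiBaer_of_isQuasiBaer (R : Type*) [Ring R] (n : ℕ)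
    (hR : IsQuasiBaer R) : IsQuasiBaer (AddMonoidAlgebra R (Fin n →₀ ℕ)) := by
  classical
  intro J
  set S : Set R := {r : R | ∃ f ∈ J, ∃ m, f.coeff m = r} with hS
  obtain ⟨e, he, hset⟩ := hR (TwoSidedIdeal.span S)
  have h_kill_e : ∀ a ∈ TwoSidedIdeal.span S, a * e = 0 := by
    have : e ∈ {x : R | e * x = x} := he
    rw [← hset] at this
    exact this
  refine ⟨AddMonoidAlgebra.single 0 e, ?_, ?_⟩
  · rw [AddMonoidAlgebra.single_mul_single, he, add_zero]
  · ext x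
    simp only [Set.mem_setOf_eq]
    constructor
    · intro hx
      apply AddMonoidAlgebra.ext
      ext m
      rw [AddMonoidAlgebra.coeff_single_zero_mul]
      have hmem : x.coeff m ∈ {y : R | ∀ a ∈ TwoSidedIdeal.span S, a * y = 0} := by
        intro a ha
        obtain ⟨K, hK⟩ := right_ann_twoSidedIdeal_aux (R := R) (x.coeff m)
        have hSK : S ⊆ K := by
          rintro y ⟨f, hf, μ, rfl⟩
          refine SetLike.mem_coe.mpr ((hK (f.coeff μ)).mpr fun s => ?_)
          have hH : ∀ p : AddMonoidAlgebra R (Fin n →₀ ℕ), f * p * x = 0 := by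
            intro p
            exact hx (f * p) (TwoSidedIdeal.mul_mem_right _ _ _ hf)
          exact key_lemma hR (f.coeff.support.card + x.coeff.support.card) f x le_rfl hH μ s m
        have hcK : a ∈ K := TwoSidedIdeal.mem_span_iff.mp ha K hSK
        have := (hK a).mp hcK 1
        rwa [mul_one] at this
      rw [hset] at hmem
      exact hmem
    · intro hx f hf
      have hfe : f * AddMonoidAlgebra.single 0 e = 0 := by
        apply AddMonoidAlgebra.ext
        ext μ
        rw [AddMonoidAlgebra.coeff_mul_single_zero]
        have hμS : f.coeff μ ∈ S := ⟨f, hf, μ, rfl⟩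
        exact h_kill_e _ (TwoSidedIdeal.subset_span hμS)
      conv_lhs => rw [← hx, ← mul_assoc, hfe, zero_mul]
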